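/- Let δ be a dominant weight of a simple Lie algebra g with simple root set S. Suppose γ ∈ Π_δ satisfies δ − γ = Σ_{α ∈ S'} k_α α with S' ⊂ S and k_α > 0 for all α ∈ S'. Then S' is δ-admissible (every indecomposable component of S' contains a root not orthogonal to δ), and γ lies in the dominant face F_{S'} = Conv(w'·δ : w' ∈ W_{S'}) of the weight polytope K(δ). -/

import Mathlib

open scoped RealInnerProductSpace

/-- The reflection in the hyperplane orthogonal to `α`. -/
noncomputable def sRefl {d : ℕ} (α v : EuclideanSpace ℝ (Fin d)) :
    EuclideanSpace ℝ (Fin d) := v - (2 * ⟪v, α⟫ / ⟪α, α⟫) • α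

/-- The orbit of `δ` under the parabolic subgroup `W_{S'}` generated by the reflections
in the roots of `S'`. -/
def parabolicOrbit {d : ℕ} (S' : Finset (EuclideanSpace ℝ (Fin d)))
    (δ : EuclideanSpace ℝ (Fin d)) : Set (EuclideanSpace ℝ (Fin d)) :=
  {v | ∃ l : List (EuclideanSpace ℝ (Fin d)), (∀ α ∈ l, α ∈ S') ∧ v = l.foldr sRefl δ}

/-- `S'` is `δ`-admissible: every indecomposable component of `S'` contains a root not
orthogonal to `δ`; equivalently every root of `S'` is connected inside `S'`, through
consecutively non-orthogonal roots, to a root non-orthogonal to `δ`. -/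
def DeltaAdmissible {d : ℕ} (S' : Finset (EuclideanSpace ℝ (Fin d)))
    (δ : EuclideanSpace ℝ (Fin d)) : Prop :=
  ∀ α ∈ S', ∃ (r : ℕ) (c : ℕ → EuclideanSpace ℝ (Fin d)),
    c 0 = α ∧ (∀ i ≤ r, c i ∈ S') ∧ (∀ i < r, ⟪c i, c (i + 1)⟫ ≠ 0) ∧ ⟪c r, δ⟫ ≠ 0


variable {d : ℕ}

local notation "E" => EuclideanSpace ℝ (Fin d)

lemma sRefl_add (α u v : E) : sRefl α (u + v) = sRefl α u + sRefl α v := by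
  simp only [sRefl, inner_add_left]
  rw [show 2 * (⟪u,α⟫ + ⟪v,α⟫) / ⟪α,α⟫ = 2*⟪u,α⟫/⟪α,α⟫ + 2*⟪v,α⟫/⟪α,α⟫ by ring, add_smul]
  abel

lemma sRefl_smul (α : E) (c : ℝ) (v : E) : sRefl α (c • v) = c • sRefl α v := by
  simp only [sRefl, real_inner_smul_left, smul_sub, smul_smul]
  rw [show 2 * (c * ⟪v,α⟫) / ⟪α,α⟫ = c * (2*⟪v,α⟫/⟪α,α⟫) by ring]

noncomputable def sReflL (α : E) : E →ₗ[ℝ] E where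
  toFun := sRefl α
  map_add' := sRefl_add α
  map_smul' := sRefl_smul α

lemma sRefl_involutive {α : E} (hα : α ≠ 0) (v : E) : sRefl α (sRefl α v) = v := by
  have hne : ⟪α, α⟫ ≠ 0 := inner_self_ne_zero.mpr hα
  simp only [sRefl, inner_sub_left, real_inner_smul_left]
  rw [sub_sub, ← add_smul]
  generalize ha : (⟪v,α⟫ : ℝ) = a at *
  generalize hb : (⟪α,α⟫ : ℝ) = b at *
  rw [show 2*a/b + 2 * (a - 2*a/b * b) / b = 0 by field_simp; ring]
  simp

lemma delta_mem_orbit (S' : Finset E) (δ : E) : δ ∈ parabolicOrbit S' δ :=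
  ⟨[], by simp, rfl⟩

lemma sRefl_mem_orbit {S' : Finset E} {δ β v : E} (hβ : β ∈ S')
    (hv : v ∈ parabolicOrbit S' δ) : sRefl β v ∈ parabolicOrbit S' δ := by
  obtain ⟨l, hl, rfl⟩ := hv
  exact ⟨β :: l, by simpa using ⟨hβ, hl⟩, rfl⟩

lemma sRefl_mem_hull {S' : Finset E} {δ β x : E} (hβ : β ∈ S')
    (hx : x ∈ convexHull ℝ (parabolicOrbit S' δ)) :
    sRefl β x ∈ convexHull ℝ (parabolicOrbit S' δ) := by
  have h1 : sRefl β x ∈ (sReflL β) '' (convexHull ℝ (parabolicOrbit S' δ)) :=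
    ⟨x, hx, rfl⟩
  rw [LinearMap.image_convexHull] at h1
  refine convexHull_mono ?_ h1
  rintro y ⟨v, hv, rfl⟩
  exact sRefl_mem_orbit hβ hv

lemma li_coeffs {S : Finset E}
    (hli : LinearIndependent ℝ (Subtype.val : {x // x ∈ S} → E))
    (f : E → ℝ) (h : ∑ α ∈ S, f α • α = 0) : ∀ α ∈ S, f α = 0 := by
  intro α hα
  have := Fintype.linearIndependent_iff.mp hli (fun i => f i.val)
    (by rw [← h, ← Finset.sum_coe_sort S (fun α => f α • α)])
  exact this ⟨α, hα⟩

lemma mem_ne_zero {S : Finset E}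
    (hli : LinearIndependent ℝ (Subtype.val : {x // x ∈ S} → E))
    {α : E} (hα : α ∈ S) : α ≠ 0 := by
  intro h0
  classical
  have := li_coeffs hli (fun x => if x = α then 1 else 0) (by
    rw [Finset.sum_eq_single α]
    · simp [h0]
    · intro b _ hb; simp [hb]
    · intro h; exact absurd hα h) α hα
  simp at this

lemma li_unique {S : Finset E}
    (hli : LinearIndependent ℝ (Subtype.val : {x // x ∈ S} → E))
    (f g : E → ℝ) (h : ∑ α ∈ S, f α • α = ∑ α ∈ S, g α • α) :
    ∀ α ∈ S, f α = g α := by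
  intro α hα
  have h0 := li_coeffs hli (fun x => f x - g x) (by
    simp only [sub_smul, Finset.sum_sub_distrib, h, sub_self]) α hα
  simp only [sub_eq_zero] at h0
  exact h0

open scoped Classical in
lemma sum_extend {S S' : Finset E} (hS' : S' ⊆ S) (g : E → ℝ) :
    ∑ α ∈ S', g α • α = ∑ α ∈ S, (if α ∈ S' then g α else 0) • α := by
  classical
  rw [← Finset.sum_subset hS' (fun α _ hα => by rw [if_neg hα, zero_smul])]
  exact Finset.sum_congr rfl fun α hα => by rw [if_pos hα]

lemma chain_step {Pδ S S' : Finset E} {δ : E}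
    (hS' : S' ⊆ S)
    (hli : LinearIndependent ℝ (Subtype.val : {x // x ∈ S} → E))
    (hQ : ∀ γ' ∈ Pδ, ∃ m : E → ℕ, δ - γ' = ∑ α ∈ S, (m α : ℝ) • α)
    (hchain : ∀ γ' ∈ Pδ, ∃ (r : ℕ) (c : ℕ → E),
      c 0 = γ' ∧ c r = δ ∧ (∀ i ≤ r, c i ∈ Pδ) ∧ ∀ i < r, c (i + 1) - c i ∈ S)
    {γ' : E} (hγ' : γ' ∈ Pδ) (m : E → ℕ)
    (hm : δ - γ' = ∑ α ∈ S', (m α : ℝ) • α) (hne : γ' ≠ δ) :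
    ∃ β ∈ S', ∃ m' : E → ℕ, γ' + β ∈ Pδ ∧
      (δ - (γ' + β) = ∑ α ∈ S', (m' α : ℝ) • α) ∧
      (∑ α ∈ S', m' α) + 1 = ∑ α ∈ S', m α := by
  classical
  obtain ⟨r, c, hc0, hcr, hcP, hcs⟩ := hchain γ' hγ'
  have hr : r ≠ 0 := by rintro rfl; exact hne (by rw [← hc0, hcr])
  set β := c 1 - c 0 with hβdef
  have hβS : β ∈ S := hcs 0 (Nat.pos_of_ne_zero hr)
  have hμP : c 1 ∈ Pδ := hcP 1 (Nat.one_le_iff_ne_zero.mpr hr)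
  have hμ : γ' + β = c 1 := by rw [hβdef, hc0]; abel
  obtain ⟨m₀, hm₀⟩ := hQ (c 1) hμP
  have hsum2 : ∑ α ∈ S, (if α = β then (1:ℝ) else 0) • α = β := by
    rw [Finset.sum_eq_single β (fun b _ hb => by rw [if_neg hb, zero_smul])
      (fun h => absurd hβS h), if_pos rfl, one_smul]
  have hid : ∑ α ∈ S, ((m₀ α : ℝ) + if α = β then 1 else 0) • α
      = ∑ α ∈ S, (if α ∈ S' then (m α : ℝ) else 0) • α := by
    calc ∑ α ∈ S, ((m₀ α : ℝ) + if α = β then 1 else 0) • α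
        = ∑ α ∈ S, ((m₀ α : ℝ) • α + (if α = β then (1:ℝ) else 0) • α) :=
          Finset.sum_congr rfl fun α _ => add_smul _ _ _
      _ = (∑ α ∈ S, (m₀ α : ℝ) • α) + ∑ α ∈ S, (if α = β then (1:ℝ) else 0) • α :=
          Finset.sum_add_distrib
      _ = (δ - c 1) + β := by rw [← hm₀, hsum2]
      _ = δ - γ' := by rw [← hμ]; abel
      _ = ∑ α ∈ S, (if α ∈ S' then (m α : ℝ) else 0) • α := by rw [hm, sum_extend hS']
  have hcoef := li_unique hli _ _ hid
  have hβ' : β ∈ S' := by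
    by_contra hn
    have h := hcoef β hβS
    rw [if_pos rfl, if_neg hn] at h
    have h2 : (0:ℝ) ≤ (m₀ β : ℝ) := Nat.cast_nonneg _
    linarith
  have hoff : ∀ α ∈ S, α ∉ S' → m₀ α = 0 := by
    intro α hα hα'
    have h := hcoef α hα
    rw [if_neg hα', if_neg (by rintro rfl; exact hα' hβ')] at h
    have h3 : (m₀ α : ℝ) = 0 := by linarith
    exact_mod_cast h3
  have hon : ∀ α ∈ S', m₀ α + (if α = β then 1 else 0) = m α := by
    intro α hα
    have h := hcoef α (hS' hα)
    rw [if_pos hα] at h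
    split_ifs at h ⊢ with hc
    · exact_mod_cast h
    · exact_mod_cast h
  refine ⟨β, hβ', m₀, by rw [hμ]; exact hμP, ?_, ?_⟩
  · rw [hμ, hm₀, sum_extend hS' (fun α => (m₀ α : ℝ))]
    refine Finset.sum_congr rfl fun α hα => ?_
    split_ifs with hc
    · rfl
    · rw [hoff α hα hc]; simp
  · calc (∑ α ∈ S', m₀ α) + 1
        = ∑ α ∈ S', (m₀ α + if α = β then 1 else 0) := by
          rw [Finset.sum_add_distrib, Finset.sum_ite_eq' S' β (fun _ => 1), if_pos hβ']
      _ = ∑ α ∈ S', m α := Finset.sum_congr rfl hon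

lemma refl_step {Pδ S S' : Finset E} {δ : E}
    (hS' : S' ⊆ S)
    (hli : LinearIndependent ℝ (Subtype.val : {x // x ∈ S} → E))
    (hQ : ∀ γ' ∈ Pδ, ∃ m : E → ℕ, δ - γ' = ∑ α ∈ S, (m α : ℝ) • α)
    (hrefl : ∀ α ∈ S, ∀ γ' ∈ Pδ, sRefl α γ' ∈ Pδ)
    {γ' : E} (hγ' : γ' ∈ Pδ) (m : E → ℕ)
    (hm : δ - γ' = ∑ α ∈ S', (m α : ℝ) • α)
    {β : E} (hβ : β ∈ S') (hneg : ⟪γ', β⟫ < 0) :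
    ∃ m' : E → ℕ, sRefl β γ' ∈ Pδ ∧
      (δ - sRefl β γ' = ∑ α ∈ S', (m' α : ℝ) • α) ∧
      ∑ α ∈ S', m' α < ∑ α ∈ S', m α := by
  classical
  have hβS : β ∈ S := hS' hβ
  have hβ0 : β ≠ 0 := mem_ne_zero hli hβS
  have hbb : (0:ℝ) < ⟪β, β⟫ := by
    have h0 : 0 < ‖β‖ := norm_pos_iff.mpr hβ0
    rw [real_inner_self_eq_norm_sq]; positivity
  set cc : ℝ := 2 * ⟪γ', β⟫ / ⟪β, β⟫ with hcc
  have hccneg : cc < 0 := div_neg_of_neg_of_pos (by linarith) hbb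
  have hP1 : sRefl β γ' ∈ Pδ := hrefl β hβS γ' hγ'
  obtain ⟨m₀, hm₀⟩ := hQ _ hP1
  have hexp : δ - sRefl β γ' = (δ - γ') + cc • β := by
    simp only [sRefl, ← hcc]; abel
  have hsum2 : ∑ α ∈ S, (if α = β then cc else 0) • α = cc • β := by
    rw [Finset.sum_eq_single β (fun b _ hb => by rw [if_neg hb, zero_smul])
      (fun h => absurd hβS h), if_pos rfl]
  have hid : ∑ α ∈ S, (m₀ α : ℝ) • α
      = ∑ α ∈ S, ((if α ∈ S' then (m α : ℝ) else 0) + if α = β then cc else 0) • α := by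
    calc ∑ α ∈ S, (m₀ α : ℝ) • α = δ - sRefl β γ' := hm₀.symm
      _ = (δ - γ') + cc • β := hexp
      _ = (∑ α ∈ S, (if α ∈ S' then (m α : ℝ) else 0) • α)
          + ∑ α ∈ S, (if α = β then cc else 0) • α := by
            rw [hsum2, hm, sum_extend hS']
      _ = ∑ α ∈ S, ((if α ∈ S' then (m α : ℝ) else 0) + if α = β then cc else 0) • α := by
            rw [← Finset.sum_add_distrib]
            exact Finset.sum_congr rfl fun α _ => (add_smul _ _ _).symm
  have hcoef := li_unique hli _ _ hid
  have hoff : ∀ α ∈ S, α ∉ S' → m₀ α = 0 := by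
    intro α hα hα'
    have h := hcoef α hα
    rw [if_neg hα', if_neg (by rintro rfl; exact hα' hβ)] at h
    exact_mod_cast h
  have honβ : m₀ β < m β := by
    have h := hcoef β hβS
    rw [if_pos hβ, if_pos rfl] at h
    have : (m₀ β : ℝ) < (m β : ℝ) := by linarith
    exact_mod_cast this
  have hon : ∀ α ∈ S', α ≠ β → m₀ α = m α := by
    intro α hα hne
    have h := hcoef α (hS' hα)
    rw [if_pos hα, if_neg hne] at h
    have h2 : (m₀ α : ℝ) = m α := by linarith
    exact_mod_cast h2
  refine ⟨m₀, hP1, ?_, ?_⟩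
  · rw [hm₀, sum_extend hS' (fun α => (m₀ α : ℝ))]
    refine Finset.sum_congr rfl fun α hα => ?_
    split_ifs with hc
    · rfl
    · rw [hoff α hα hc]; simp
  · exact Finset.sum_lt_sum
      (fun i hi => by rcases eq_or_ne i β with rfl | hne
                      · exact honβ.le
                      · exact (hon i hi hne).le)
      ⟨β, hβ, honβ⟩

lemma mem_hull_of_decomp {Pδ S S' : Finset E} {δ : E}
    (hS' : S' ⊆ S)
    (hli : LinearIndependent ℝ (Subtype.val : {x // x ∈ S} → E))
    (hQ : ∀ γ' ∈ Pδ, ∃ m : E → ℕ, δ - γ' = ∑ α ∈ S, (m α : ℝ) • α)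
    (hrefl : ∀ α ∈ S, ∀ γ' ∈ Pδ, sRefl α γ' ∈ Pδ)
    (hchain : ∀ γ' ∈ Pδ, ∃ (r : ℕ) (c : ℕ → E),
      c 0 = γ' ∧ c r = δ ∧ (∀ i ≤ r, c i ∈ Pδ) ∧ ∀ i < r, c (i + 1) - c i ∈ S) :
    ∀ n : ℕ, ∀ γ' ∈ Pδ, ∀ m : E → ℕ, (δ - γ' = ∑ α ∈ S', (m α : ℝ) • α) →
      (∑ α ∈ S', m α ≤ n) → γ' ∈ convexHull ℝ (parabolicOrbit S' δ) := by
  intro n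
  induction n with
  | zero =>
    intro γ' hγ' m hm hle
    have hz : ∀ α ∈ S', m α = 0 := Finset.sum_eq_zero_iff.mp (Nat.le_zero.mp hle)
    have h0 : δ - γ' = 0 := by
      rw [hm]; exact Finset.sum_eq_zero fun α hα => by rw [hz α hα]; simp
    rw [← sub_eq_zero.mp h0]
    exact subset_convexHull _ _ (delta_mem_orbit S' δ)
  | succ n ih =>
    intro γ' hγ' m hm hle
    by_cases hne : γ' = δ
    · rw [hne]; exact subset_convexHull _ _ (delta_mem_orbit S' δ)
    obtain ⟨β, hβ, m', hμP, hμdec, hht⟩ := chain_step hS' hli hQ hchain hγ' m hm hne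
    have hβ0 : β ≠ 0 := mem_ne_zero hli (hS' hβ)
    have hbb : (0:ℝ) < ⟪β, β⟫ := by
      have h0 : 0 < ‖β‖ := norm_pos_iff.mpr hβ0
      rw [real_inner_self_eq_norm_sq]; positivity
    have hbne : (⟪β, β⟫ : ℝ) ≠ 0 := hbb.ne'
    by_cases hsign : 0 ≤ 2 * ⟪γ', β⟫ / ⟪β, β⟫ + 1
    · set t : ℝ := 2 * ⟪γ', β⟫ / ⟪β, β⟫ + 1 with ht
      have h1t : 0 < 1 + t := by linarith
      have hμhull : γ' + β ∈ convexHull ℝ (parabolicOrbit S' δ) :=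
        ih _ hμP m' hμdec (by omega)
      have hshull : sRefl β (γ' + β) ∈ convexHull ℝ (parabolicOrbit S' δ) :=
        sRefl_mem_hull hβ hμhull
      have harith : ∀ a b : ℝ, b ≠ 0 → 2 * (a + b) / b = (2 * a / b + 1) + 1 := by
        intro a b hb; field_simp; ring
      have hexp : sRefl β (γ' + β) = γ' - t • β := by
        simp only [sRefl, inner_add_left]
        rw [harith _ _ hbne, ← ht]
        module
      have key : γ' = (t / (1 + t)) • (γ' + β) + (1 / (1 + t)) • sRefl β (γ' + β) := by
        rw [hexp]
        match_scalars <;> (field_simp; try ring)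
      rw [key]
      exact (convex_convexHull ℝ _) hμhull hshull (div_nonneg hsign h1t.le)
        (by positivity) (by rw [← add_div, add_comm t 1, div_self h1t.ne'])
    · have hneg : ⟪γ', β⟫ < 0 := by
        by_contra h
        push_neg at h
        have : (0:ℝ) ≤ 2 * ⟪γ', β⟫ / ⟪β, β⟫ := div_nonneg (by linarith) hbb.le
        exact hsign (by linarith)
      obtain ⟨m'', hP1, hdec1, hlt⟩ := refl_step hS' hli hQ hrefl hγ' m hm hβ hneg
      have h1 := ih _ hP1 m'' hdec1 (by omega)
      have h2 := sRefl_mem_hull hβ h1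
      rwa [sRefl_involutive hβ0] at h2

lemma orbit_perp {S' : Finset E} {δ : E} (P : E → Prop)
    (hPδ : ∀ β ∈ S', P β → ⟪β, δ⟫ = 0)
    (hPcl : ∀ β ∈ S', P β → ∀ α ∈ S', ⟪β, α⟫ ≠ 0 → P α) :
    ∀ l : List E, (∀ α ∈ l, α ∈ S') → ∀ β ∈ S', P β → ⟪l.foldr sRefl δ, β⟫ = 0 := by
  intro l
  induction l with
  | nil =>
    intro _ β hβ hPβ
    show ⟪δ, β⟫ = 0
    rw [real_inner_comm]
    exact hPδ β hβ hPβ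
  | cons α l ihl =>
    intro hl β hβ hPβ
    have hα : α ∈ S' := hl α (by simp)
    have ihw := ihl (fun x hx => hl x (by simp [hx]))
    show ⟪sRefl α (l.foldr sRefl δ), β⟫ = 0
    rw [sRefl, inner_sub_left, real_inner_smul_left, ihw β hβ hPβ]
    by_cases hPα : P α
    · rw [ihw α hα hPα]
      simp
    · have hab : ⟪α, β⟫ = 0 := by
        by_contra hne
        exact hPα (hPcl β hβ hPβ α hα (by rw [real_inner_comm]; exact hne))
      rw [hab]
      simp


/-- If `γ ∈ Π_δ` satisfies `δ − γ = Σ_{α ∈ S'} k_α α` with all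
`k_α > 0`, then `S'` is `δ`-admissible and `γ` lies in the dominant face
`F_{S'} = Conv(W_{S'}·δ)` of the weight polytope `K(δ)`. -/
theorem mem_dominant_face_of_positive_decomposition
    (d : ℕ)
    (Pδ S : Finset (EuclideanSpace ℝ (Fin d)))
    (K : EuclideanSpace ℝ (Fin d) → ℕ)
    (δ : EuclideanSpace ℝ (Fin d))
    (hδ : δ ∈ Pδ)
    (hKpos : ∀ γ ∈ Pδ, 0 < K γ)
    (hdom : ∀ α ∈ S, 0 ≤ ⟪δ, α⟫)
    (hli : LinearIndependent ℝ (Subtype.val : {x // x ∈ S} → EuclideanSpace ℝ (Fin d)))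
    -- `Π_δ` is invariant under the simple reflections, with invariant multiplicities
    (hrefl : ∀ α ∈ S, ∀ γ' ∈ Pδ, sRefl α γ' ∈ Pδ ∧ K (sRefl α γ') = K γ')
    -- every weight is dominated by `δ`:  `δ − γ' ∈ Q⁺`
    (hQ : ∀ γ' ∈ Pδ, ∃ m : EuclideanSpace ℝ (Fin d) → ℕ,
      δ - γ' = ∑ α ∈ S, (m α : ℝ) • α)
    -- every weight is connected to the highest weight `δ` by a chain of simple roots
    (hchain : ∀ γ' ∈ Pδ, ∃ (r : ℕ) (c : ℕ → EuclideanSpace ℝ (Fin d)),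
      c 0 = γ' ∧ c r = δ ∧ (∀ i ≤ r, c i ∈ Pδ) ∧ ∀ i < r, c (i + 1) - c i ∈ S)
    (γ : EuclideanSpace ℝ (Fin d)) (hγ : γ ∈ Pδ)
    (S' : Finset (EuclideanSpace ℝ (Fin d))) (hS' : S' ⊆ S)
    (k : EuclideanSpace ℝ (Fin d) → ℕ)
    (hdec : δ - γ = ∑ α ∈ S', (k α : ℝ) • α)
    (hkpos : ∀ α ∈ S', 0 < k α) :
    DeltaAdmissible S' δ ∧ γ ∈ convexHull ℝ (parabolicOrbit S' δ) := by
  classical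
  have hreflm : ∀ α ∈ S, ∀ γ' ∈ Pδ, sRefl α γ' ∈ Pδ :=
    fun α hα γ' hγ' => (hrefl α hα γ' hγ').1
  have hhull : γ ∈ convexHull ℝ (parabolicOrbit S' δ) :=
    mem_hull_of_decomp hS' hli hQ hreflm hchain (∑ α ∈ S', k α) γ hγ k hdec le_rfl
  refine ⟨?_, hhull⟩
  intro a ha
  by_contra hcon
  -- connectivity predicate: connected to `a` within `S'`
  set Conn : EuclideanSpace ℝ (Fin d) → Prop := fun β =>
    ∃ (r : ℕ) (c : ℕ → EuclideanSpace ℝ (Fin d)),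
      c 0 = a ∧ (∀ i ≤ r, c i ∈ S') ∧ (∀ i < r, ⟪c i, c (i + 1)⟫ ≠ 0) ∧ c r = β
    with hConn
  have hConna : Conn a :=
    ⟨0, fun _ => a, rfl, fun i _ => ha, fun i hi => absurd hi (Nat.not_lt_zero i), rfl⟩
  have hCext : ∀ β, Conn β → ∀ α' ∈ S', ⟪β, α'⟫ ≠ 0 → Conn α' := by
    rintro β ⟨r, c, hc0, hcS, hcne, hcr⟩ α' hα' hne
    refine ⟨r + 1, fun i => if i = r + 1 then α' else c i, ?_, ?_, ?_, ?_⟩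
    · simp [hc0]
    · intro i hi
      by_cases h : i = r + 1
      · simpa [h]
      · have h2 : i ≤ r := by omega
        simpa [h] using hcS i h2
    · intro i hi
      show ⟪(if i = r + 1 then α' else c i), (if i + 1 = r + 1 then α' else c (i + 1))⟫ ≠ 0
      by_cases h : i + 1 = r + 1
      · rw [if_neg (by omega : ¬ i = r + 1), if_pos h]
        have h3 : i = r := by omega
        rw [h3, hcr]
        exact hne
      · have h1 : ¬ i = r + 1 := by omega
        rw [if_neg h1, if_neg h]
        exact hcne i (by omega)
    · simp
  have hCδ : ∀ β, Conn β → ⟪β, δ⟫ = 0 := by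
    intro β hC
    by_contra hne
    obtain ⟨r, c, hc0, hcS, hcne, hcr⟩ := hC
    exact hcon ⟨r, c, hc0, hcS, hcne, by rwa [hcr]⟩
  set S'' := S'.filter Conn with hS''def
  have hS''sub : S'' ⊆ S' := Finset.filter_subset _ _
  have ha'' : a ∈ S'' := Finset.mem_filter.mpr ⟨ha, hConna⟩
  -- every orbit point, hence every hull point, is orthogonal to each β ∈ S''
  have hγperp : ∀ β ∈ S'', ⟪γ, β⟫ = 0 := by
    intro β hβ''
    obtain ⟨hβ', hCβ⟩ := Finset.mem_filter.mp hβ''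
    have hsub : parabolicOrbit S' δ ⊆ {v : EuclideanSpace ℝ (Fin d) | ⟪v, β⟫ = 0} := by
      rintro v ⟨l, hl, rfl⟩
      exact orbit_perp Conn (fun x _ hCx => hCδ x hCx)
        (fun x _ hCx α hα hne => hCext x hCx α hα hne) l hl β hβ' hCβ
    have hconv : Convex ℝ {v : EuclideanSpace ℝ (Fin d) | ⟪v, β⟫ = 0} := by
      intro x hx y hy p q hp hq hpq
      simp only [Set.mem_setOf_eq] at hx hy ⊢
      rw [inner_add_left, real_inner_smul_left, real_inner_smul_left, hx, hy]
      ring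
    exact convexHull_min hsub hconv hhull
  have hδperp : ∀ β ∈ S'', ⟪δ, β⟫ = 0 := by
    intro β hβ''
    rw [real_inner_comm]
    exact hCδ β (Finset.mem_filter.mp hβ'').2
  -- set q = ∑_{β ∈ S''} k_β β; show ⟪q, β⟫ = 0 for β ∈ S''
  set q : EuclideanSpace ℝ (Fin d) := ∑ β ∈ S'', (k β : ℝ) • β with hq
  set q' : EuclideanSpace ℝ (Fin d) :=
    ∑ β ∈ S'.filter (fun β => ¬ Conn β), (k β : ℝ) • β with hq'
  have hsplit : δ - γ = q + q' := by
    rw [hdec, ← Finset.sum_filter_add_sum_filter_not S' Conn (fun α => (k α : ℝ) • α)]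
  have hqβ : ∀ β ∈ S'', ⟪q, β⟫ = 0 := by
    intro β hβ''
    obtain ⟨hβ', hCβ⟩ := Finset.mem_filter.mp hβ''
    have h1 : ⟪δ - γ, β⟫ = 0 := by
      rw [inner_sub_left, hγperp β hβ'', hδperp β hβ'', sub_zero]
    have h2 : ⟪q', β⟫ = 0 := by
      rw [hq', sum_inner]
      refine Finset.sum_eq_zero fun α hα => ?_
      obtain ⟨hα', hnCα⟩ := Finset.mem_filter.mp hα
      have hab : ⟪α, β⟫ = 0 := by
        by_contra hne
        exact hnCα (hCext β hCβ α hα' (by rw [real_inner_comm]; exact hne))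
      rw [real_inner_smul_left, hab, mul_zero]
    have h3 : q = (δ - γ) - q' := by rw [hsplit]; abel
    rw [h3, inner_sub_left, h1, h2, sub_zero]
  have hqq : ⟪q, q⟫ = 0 := by
    rw [show ⟪q, q⟫ = ⟪q, ∑ β ∈ S'', (k β : ℝ) • β⟫ from by rw [← hq]]
    rw [inner_sum]
    refine Finset.sum_eq_zero fun β hβ'' => ?_
    rw [real_inner_smul_right, hqβ β hβ'', mul_zero]
  have hq0 : q = 0 := inner_self_eq_zero.mp hqq
  -- contradiction with linear independence and k a > 0
  have hS''S : S'' ⊆ S := hS''sub.trans hS'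
  have h0 : ∑ α ∈ S, (if α ∈ S'' then (k α : ℝ) else 0) • α = 0 := by
    rw [← sum_extend hS''S (fun α => (k α : ℝ)), ← hq, hq0]
  have := li_coeffs hli _ h0 a (hS''S ha'')
  rw [if_pos ha''] at this
  have hka : k a = 0 := by exact_mod_cast this
  exact absurd hka (Nat.pos_iff_ne_zero.mp (hkpos a ha))
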